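/- Let (Z_t)_{t∈ℕ₀} be a Markov chain with finite state space {s_1,...,s_n} and transition matrices P^{(t)} = (p^{(t)}_{ij}) at time t. Suppose there is σ = (σ_i) with σ_i > 0 for all i, ∑_i σ_i = 1, and σP^{(t)} = σ for all t. Let α := inf over t,i,j,k of p^{(t)}_{ij}/σ_k and β := sup over t,i,j,k of p^{(t)}_{ij}/σ_k, and assume α > 0. Then for all t ≥ 2 + 2α⁻¹ log₂ β and all i, P[Z_t = s_i] = (1 ± (1 - α/2)^t)·σ_i. -/
import Mathlib


open Finset

/-- Convergence of a (time-inhomogeneous) finite Markov chain.  The chain is encoded by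
its transition matrices `P t` (row-stochastic) and the distributions `μ t` of `Z_t`
(`μ 0` is an arbitrary initial distribution, and `μ (t+1) j = ∑ i, μ t i * P t i j`).
If `σ` is a positive common stationary distribution and
`α ≤ P t i j / σ k ≤ β` for all `t, i, j, k` with `α > 0`, then for all
`t ≥ 2 + 2 α⁻¹ log₂ β` we have `P[Z_t = s_i] = (1 ± (1 - α/2)^t) σ_i`. -/
theorem markov_chain_mixing {n : ℕ}
    (P : ℕ → Fin n → Fin n → ℝ)
    (hP0 : ∀ t i j, 0 ≤ P t i j) (hP1 : ∀ t i, ∑ j, P t i j = 1)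
    (σ : Fin n → ℝ) (hσ0 : ∀ i, 0 < σ i) (hσ1 : ∑ i, σ i = 1)
    (hstat : ∀ t j, ∑ i, σ i * P t i j = σ j)
    (α β : ℝ) (hα : 0 < α)
    (hαle : ∀ t i j k, α ≤ P t i j / σ k)
    (hβge : ∀ t i j k, P t i j / σ k ≤ β)
    (μ : ℕ → Fin n → ℝ)
    (hμ0 : ∀ i, 0 ≤ μ 0 i) (hμ1 : ∑ i, μ 0 i = 1)
    (hμrec : ∀ t j, μ (t + 1) j = ∑ i, μ t i * P t i j) :
    ∀ t : ℕ, 2 + 2 * α⁻¹ * Real.logb 2 β ≤ (t : ℝ) →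
      ∀ i, |μ t i - σ i| ≤ (1 - α / 2) ^ t * σ i := by
  intro t ht i
  have hn : 0 < n := i.pos
  have i0 : Fin n := i
  -- pointwise bounds on P
  have hPlow : ∀ s i j, α * σ j ≤ P s i j := by
    intro s i j
    have h := hαle s i j j
    rwa [le_div_iff₀ (hσ0 j)] at h
  have hPhigh : ∀ s i j, P s i j ≤ β * σ j := by
    intro s i j
    have h := hβge s i j j
    rwa [div_le_iff₀ (hσ0 j)] at h
  -- β ≥ 1
  have hβ1 : (1:ℝ) ≤ β := by
    calc (1:ℝ) = ∑ j, P 0 i0 j := (hP1 0 i0).symm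
      _ ≤ ∑ j, β * σ j := Finset.sum_le_sum fun j _ => hPhigh 0 i0 j
      _ = β := by rw [← Finset.mul_sum, hσ1, mul_one]
  -- α ≤ 1
  have hα1 : α ≤ 1 := by
    calc α = ∑ j, α * σ j := by rw [← Finset.mul_sum, hσ1, mul_one]
      _ ≤ ∑ j, P 0 i0 j := Finset.sum_le_sum fun j _ => hPlow 0 i0 j
      _ = 1 := hP1 0 i0
  -- total mass is preserved
  have hsum : ∀ s, ∑ k, μ s k = 1 := by
    intro s
    induction s with
    | zero => exact hμ1
    | succ s ih =>
      calc ∑ j, μ (s+1) j = ∑ j, ∑ k, μ s k * P s k j := by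
            refine Finset.sum_congr rfl fun j _ => hμrec s j
        _ = ∑ k, ∑ j, μ s k * P s k j := Finset.sum_comm
        _ = ∑ k, μ s k * ∑ j, P s k j := by
            refine Finset.sum_congr rfl fun k _ => (Finset.mul_sum _ _ _).symm
        _ = ∑ k, μ s k := by
            refine Finset.sum_congr rfl fun k _ => by rw [hP1, mul_one]
        _ = 1 := ih
  -- key contraction estimate
  have key : ∀ m : ℕ, ∀ j, |μ (m+1) j - σ j| ≤ (β - α) * (1 - α)^m * σ j := by
    intro m
    induction m with
    | zero =>
      intro j
      have hup : μ 1 j ≤ β * σ j := by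
        calc μ 1 j = ∑ k, μ 0 k * P 0 k j := hμrec 0 j
          _ ≤ ∑ k, μ 0 k * (β * σ j) := by
              refine Finset.sum_le_sum fun k _ =>
                mul_le_mul_of_nonneg_left (hPhigh 0 k j) (hμ0 k)
          _ = β * σ j := by rw [← Finset.sum_mul, hμ1, one_mul]
      have hlo : α * σ j ≤ μ 1 j := by
        calc α * σ j = ∑ k, μ 0 k * (α * σ j) := by
              rw [← Finset.sum_mul, hμ1, one_mul]
          _ ≤ ∑ k, μ 0 k * P 0 k j := by
              refine Finset.sum_le_sum fun k _ =>
                mul_le_mul_of_nonneg_left (hPlow 0 k j) (hμ0 k)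
          _ = μ 1 j := (hμrec 0 j).symm
      rw [pow_zero, mul_one, abs_le]
      have hσj := (hσ0 j).le
      constructor
      · nlinarith
      · nlinarith
    | succ m ih =>
      intro j
      have hid : μ (m+2) j - σ j
          = ∑ k, (μ (m+1) k - σ k) * (P (m+1) k j - α * σ j) := by
        have e1 : ∑ k, (μ (m+1) k - σ k) * (P (m+1) k j - α * σ j)
            = (∑ k, μ (m+1) k * P (m+1) k j) - (α * σ j) * (∑ k, μ (m+1) k)
              - (∑ k, σ k * P (m+1) k j) + (α * σ j) * (∑ k, σ k) := by
          rw [Finset.mul_sum, Finset.mul_sum, ← Finset.sum_sub_distrib,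
            ← Finset.sum_sub_distrib, ← Finset.sum_add_distrib]
          refine Finset.sum_congr rfl fun k _ => by ring
        rw [e1, hsum (m+1), hstat (m+1) j, hσ1, hμrec (m+1) j]
        ring
      rw [hid]
      calc |∑ k, (μ (m+1) k - σ k) * (P (m+1) k j - α * σ j)|
          ≤ ∑ k, |(μ (m+1) k - σ k) * (P (m+1) k j - α * σ j)| :=
            Finset.abs_sum_le_sum_abs _ _
        _ ≤ ∑ k, ((β - α) * (1 - α)^m * σ k) * (P (m+1) k j - α * σ j) := by
            refine Finset.sum_le_sum fun k _ => ?_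
            rw [abs_mul]
            have h1 : |P (m+1) k j - α * σ j| = P (m+1) k j - α * σ j :=
              abs_of_nonneg (by linarith [hPlow (m+1) k j])
            rw [h1]
            exact mul_le_mul_of_nonneg_right (ih k)
              (by linarith [hPlow (m+1) k j])
        _ = (β - α) * (1 - α)^(m+1) * σ j := by
            have e2 : ∑ k, ((β - α) * (1 - α)^m * σ k) * (P (m+1) k j - α * σ j)
                = (β - α) * (1 - α)^m
                  * ∑ k, (σ k * P (m+1) k j - σ k * (α * σ j)) := by
              rw [Finset.mul_sum]
              exact Finset.sum_congr rfl fun k _ => by ring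
            rw [e2, Finset.sum_sub_distrib, ← Finset.sum_mul,
              hstat (m+1) j, hσ1]
            ring
  -- numeric setup
  have hlogb : 0 ≤ Real.logb 2 β := Real.logb_nonneg one_lt_two hβ1
  have ht2 : (2:ℝ) ≤ (t:ℝ) := by
    have : 0 ≤ 2 * α⁻¹ * Real.logb 2 β := by positivity
    linarith
  have ht2' : 2 ≤ t := by exact_mod_cast ht2
  obtain ⟨m, rfl⟩ : ∃ m, t = m + 2 := ⟨t - 2, by omega⟩
  have hm : 2 * α⁻¹ * Real.logb 2 β ≤ (m:ℝ) := by push_cast at ht ⊢; linarith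
  -- the main numeric inequality: (β-α)(1-α)^(m+1) ≤ (1-α/2)^(m+2)
  set r : ℝ := 1 - α / 2 with hr
  have hr0 : 0 < r := by rw [hr]; linarith
  have hs0 : 0 ≤ 1 - α := by linarith
  have hsr : 1 - α ≤ r^2 := by rw [hr]; nlinarith
  have hmono : ((1:ℝ) - α)^(m+1) ≤ (r^2)^(m+1) := pow_le_pow_left₀ hs0 hsr (m+1)
  -- β * r^m ≤ 1
  have hlogr : Real.log r ≤ -(α/2) := by
    have h := Real.log_le_sub_one_of_pos hr0
    rw [hr] at h
    linarith
  have hlogβ : Real.log β ≤ Real.logb 2 β := by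
    rw [Real.logb, le_div_iff₀ (Real.log_pos one_lt_two)]
    exact mul_le_of_le_one_right (Real.log_nonneg hβ1)
      (by linarith [Real.log_two_lt_d9])
  have hmain : (m:ℝ) * Real.log r ≤ -Real.log β := by
    have h1 : Real.log β ≤ (m:ℝ) * (α/2) := by
      have h2 : 2 * α⁻¹ * Real.logb 2 β * (α/2) ≤ (m:ℝ) * (α/2) :=
        mul_le_mul_of_nonneg_right hm (by linarith)
      have h3 : 2 * α⁻¹ * Real.logb 2 β * (α/2) = Real.logb 2 β := by
        field_simp
      linarith
    have h4 : (m:ℝ) * Real.log r ≤ (m:ℝ) * (-(α/2)) :=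
      mul_le_mul_of_nonneg_left hlogr (Nat.cast_nonneg m)
    linarith
  have hrm : β * r^m ≤ 1 := by
    have hrme : r^m = Real.exp ((m:ℝ) * Real.log r) := by
      rw [Real.exp_nat_mul, Real.exp_log hr0]
    have : r^m ≤ β⁻¹ := by
      rw [hrme, ← Real.exp_log (show (0:ℝ) < β⁻¹ by positivity),
        Real.exp_le_exp, Real.log_inv]
      exact hmain
    calc β * r^m ≤ β * β⁻¹ := mul_le_mul_of_nonneg_left this (by linarith)
      _ = 1 := mul_inv_cancel₀ (by linarith)
  have hnum : (β - α) * (1 - α)^(m+1) ≤ r^(m+2) := by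
    have h5 : (β - α) * (1 - α)^(m+1) ≤ β * (r^2)^(m+1) := by
      have hb : β - α ≤ β := by linarith
      have := mul_le_mul hb hmono (pow_nonneg hs0 _) (by linarith)
      linarith
    have h6 : β * (r^2)^(m+1) = (β * r^m) * r^(m+2) := by
      rw [← pow_mul, mul_assoc, ← pow_add]
      congr 2
      omega
    have h7 : (β * r^m) * r^(m+2) ≤ 1 * r^(m+2) :=
      mul_le_mul_of_nonneg_right hrm (pow_nonneg hr0.le _)
    rw [h6] at h5
    linarith [h5, h7]
  calc |μ (m+2) i - σ i| ≤ (β - α) * (1 - α)^(m+1) * σ i := key (m+1) i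
    _ ≤ r^(m+2) * σ i := mul_le_mul_of_nonneg_right hnum (hσ0 i).le
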